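/- Let k ≥ 1 be an integer, A a finite set, f_max > 0, and f : A → [0, f_max] a function with f(A) := ∑_{a∈A} f(a) > 0. Then the sum over all k-tuples (a_1,…,a_k) of distinct elements of A of the product ∏_{i∈[k]} f(a_i) equals (1 ± k² f_max / f(A)) · f(A)^k, i.e. it lies between (1 − k² f_max/f(A)) f(A)^k and (1 + k² f_max/f(A)) f(A)^k. -/

import Mathlib

set_option maxHeartbeats 1000000


open Finset

private lemma sum_biUnion_le_aux {ι β : Type*} [DecidableEq β] (s : Finset ι) (t : ι → Finset β)
    (f : β → ℝ) (hf : ∀ b, 0 ≤ f b) :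
    ∑ b ∈ s.biUnion t, f b ≤ ∑ i ∈ s, ∑ b ∈ t i, f b := by
  classical
  induction s using Finset.induction_on with
  | empty => simp
  | @insert a s ha ih =>
    rw [Finset.biUnion_insert, Finset.sum_insert ha]
    have h1 : ∑ b ∈ t a ∪ s.biUnion t, f b ≤ ∑ b ∈ t a, f b + ∑ b ∈ s.biUnion t, f b := by
      have := Finset.sum_union_inter (s₁ := t a) (s₂ := s.biUnion t) (f := f)
      have h2 : 0 ≤ ∑ b ∈ t a ∩ s.biUnion t, f b := Finset.sum_nonneg fun b _ => hf b
      linarith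
    exact h1.trans (by linarith)

theorem stmt_0 {α : Type*} [DecidableEq α] [Fintype α] (k : ℕ) (hk : 1 ≤ k)
    (A : Finset α) (fmax : ℝ) (hfmax : 0 < fmax) (f : α → ℝ)
    (hf0 : ∀ a ∈ A, 0 ≤ f a) (hf1 : ∀ a ∈ A, f a ≤ fmax)
    (hfA : 0 < ∑ a ∈ A, f a) :
    (1 - (k : ℝ) ^ 2 * fmax / ∑ a ∈ A, f a) * (∑ a ∈ A, f a) ^ k ≤
      (∑ g ∈ (Finset.univ : Finset (Fin k → α)).filter
          (fun g => Function.Injective g ∧ ∀ i, g i ∈ A), ∏ i, f (g i)) ∧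
    (∑ g ∈ (Finset.univ : Finset (Fin k → α)).filter
          (fun g => Function.Injective g ∧ ∀ i, g i ∈ A), ∏ i, f (g i)) ≤
      (1 + (k : ℝ) ^ 2 * fmax / ∑ a ∈ A, f a) * (∑ a ∈ A, f a) ^ k := by
  classical
  set S := ∑ a ∈ A, f a with hSdef
  -- replace f by a function that is nonneg and ≤ fmax everywhere? not needed, we stay in piA
  obtain ⟨a₀, ha₀⟩ : A.Nonempty := Finset.nonempty_of_sum_ne_zero hfA.ne'
  set piA := Fintype.piFinset (fun _ : Fin k => A) with hpiA
  have hmem : ∀ g : Fin k → α, g ∈ piA ↔ ∀ i, g i ∈ A := fun g => Fintype.mem_piFinset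
  have htotal : ∑ g ∈ piA, ∏ i, f (g i) = S ^ k := by
    rw [hpiA, ← Finset.prod_univ_sum]
    simp [hSdef]
  have hterm : ∀ g : Fin k → α, (∀ i, g i ∈ A) → 0 ≤ ∏ i, f (g i) :=
    fun g hg => Finset.prod_nonneg fun i _ => hf0 _ (hg i)
  have hsetEq : (Finset.univ : Finset (Fin k → α)).filter
      (fun g => Function.Injective g ∧ ∀ i, g i ∈ A) = piA.filter (fun g => Function.Injective g) := by
    ext g
    simp only [Finset.mem_filter, Finset.mem_univ, true_and, hmem]
    tauto
  have hS0 : (0:ℝ) ≤ S := hfA.le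
  -- per-pair bound
  have hpair : ∀ i j : Fin k, i ≠ j →
      ∑ g ∈ piA.filter (fun g => g i = g j), ∏ l, f (g l) ≤ fmax * S ^ (k-1) := by
    intro i j hij
    have h1 : ∑ g ∈ piA.filter (fun g => g i = g j), ∏ l, f (g l)
        ≤ ∑ g ∈ piA.filter (fun g => g i = g j), fmax * ∏ l ∈ Finset.univ.erase i, f (g l) := by
      apply Finset.sum_le_sum
      intro g hg
      rw [Finset.mem_filter] at hg
      have hgA := (hmem g).1 hg.1
      rw [← Finset.mul_prod_erase Finset.univ _ (Finset.mem_univ i)]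
      exact mul_le_mul_of_nonneg_right (hf1 _ (hgA i))
        (Finset.prod_nonneg fun l _ => hf0 _ (hgA l))
    rw [← Finset.mul_sum] at h1
    refine h1.trans (mul_le_mul_of_nonneg_left ?_ hfmax.le)
    have h2 : ∑ g ∈ piA.filter (fun g => g i = g j), ∏ l ∈ Finset.univ.erase i, f (g l)
        = ∑ h ∈ Fintype.piFinset (fun l => if l = i then ({a₀} : Finset α) else A),
            ∏ l ∈ Finset.univ.erase i, f (h l) := by
      apply Finset.sum_nbij' (fun g => Function.update g i a₀) (fun h => Function.update h i (h j))
      · intro g hg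
        rw [Finset.mem_filter] at hg
        have hgA := (hmem g).1 hg.1
        rw [Fintype.mem_piFinset]
        intro l
        by_cases hl : l = i
        · subst hl; simp
        · simp [Function.update_of_ne hl, hl, hgA l]
      · intro h hh
        rw [Fintype.mem_piFinset] at hh
        rw [Finset.mem_filter]
        constructor
        · rw [hmem]
          intro l
          by_cases hl : l = i
          · subst hl
            have := hh j
            rw [if_neg (Ne.symm hij)] at this
            simpa using this
          · have := hh l
            rw [if_neg hl] at this
            simpa [Function.update_of_ne hl] using this
        · simp [Function.update_self, Function.update_of_ne (Ne.symm hij)]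
      · intro g hg
        rw [Finset.mem_filter] at hg
        have : Function.update (Function.update g i a₀) i ((Function.update g i a₀) j)
            = Function.update g i (g j) := by
          rw [Function.update_of_ne (Ne.symm hij), Function.update_idem]
        rw [this, ← hg.2, Function.update_eq_self]
      · intro h hh
        rw [Fintype.mem_piFinset] at hh
        have hhi : h i = a₀ := by have := hh i; rw [if_pos rfl] at this; simpa using this
        rw [Function.update_idem, ← hhi, Function.update_eq_self]
      · intro g hg
        apply Finset.prod_congr rfl
        intro l hl
        rw [Function.update_of_ne (Finset.mem_erase.1 hl).1]
    rw [h2]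
    apply le_of_eq
    have h3 : ∀ h : Fin k → α, ∏ l ∈ Finset.univ.erase i, f (h l)
        = ∏ l, (if l = i then (1:ℝ) else f (h l)) := by
      intro h
      rw [← Finset.mul_prod_erase Finset.univ _ (Finset.mem_univ i), if_pos rfl, one_mul]
      exact Finset.prod_congr rfl fun l hl => by rw [if_neg (Finset.mem_erase.1 hl).1]
    calc ∑ h ∈ Fintype.piFinset (fun l => if l = i then ({a₀} : Finset α) else A),
            ∏ l ∈ Finset.univ.erase i, f (h l)
        = ∑ h ∈ Fintype.piFinset (fun l => if l = i then ({a₀} : Finset α) else A),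
            ∏ l, (if l = i then (1:ℝ) else f (h l)) := Finset.sum_congr rfl fun h _ => h3 h
      _ = ∏ l, ∑ x ∈ (if l = i then ({a₀} : Finset α) else A), (if l = i then (1:ℝ) else f x) :=
          (Finset.prod_univ_sum (fun l => if l = i then ({a₀} : Finset α) else A)
            (fun l x => if l = i then (1:ℝ) else f x)).symm
      _ = ∏ l, (if l = i then (1:ℝ) else S) := by
          apply Finset.prod_congr rfl
          intro l _
          by_cases hl : l = i <;> simp [hl, hSdef]
      _ = S ^ (k - 1) := by
          rw [← Finset.mul_prod_erase Finset.univ _ (Finset.mem_univ i), if_pos rfl, one_mul,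
            Finset.prod_congr rfl (fun l hl => if_neg (Finset.mem_erase.1 hl).1),
            Finset.prod_const, Finset.card_erase_of_mem (Finset.mem_univ i),
            Finset.card_univ, Fintype.card_fin]
  -- bound on non-injective part
  set tf : Fin k → α → ℝ := fun _ x => f x with htf
  set F : (Fin k → α) → ℝ := fun g => if ∀ i, g i ∈ A then ∏ l, f (g l) else 0 with hF
  have hFnn : ∀ g, 0 ≤ F g := by
    intro g
    simp only [hF]
    split
    · exact hterm g ‹_›
    · exact le_refl 0
  have hFeq : ∀ g ∈ piA, F g = ∏ l, f (g l) := by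
    intro g hg; simp only [hF]; rw [if_pos ((hmem g).1 hg)]
  have hnoninj : ∑ g ∈ piA.filter (fun g => ¬ Function.Injective g), ∏ l, f (g l)
      ≤ (k:ℝ)^2 * fmax * S ^ (k-1) := by
    have hsub : piA.filter (fun g => ¬ Function.Injective g) ⊆
        (Finset.univ : Finset (Fin k)).offDiag.biUnion
          (fun p => piA.filter fun g => g p.1 = g p.2) := by
      intro g hg
      rw [Finset.mem_filter] at hg
      obtain ⟨i, j, hgij, hij⟩ := Function.not_injective_iff.1 hg.2
      exact Finset.mem_biUnion.2 ⟨(i,j), Finset.mem_offDiag.2 ⟨Finset.mem_univ _,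
        Finset.mem_univ _, hij⟩, Finset.mem_filter.2 ⟨hg.1, hgij⟩⟩
    have hcard : (((Finset.univ : Finset (Fin k)).offDiag.card : ℝ)) ≤ (k:ℝ)^2 := by
      rw [Finset.offDiag_card, Finset.card_univ, Fintype.card_fin]
      calc ((k * k - k : ℕ) : ℝ) ≤ ((k * k : ℕ) : ℝ) := Nat.cast_le.2 (Nat.sub_le _ _)
        _ = (k:ℝ)^2 := by push_cast; ring
    calc ∑ g ∈ piA.filter (fun g => ¬ Function.Injective g), ∏ l, f (g l)
        = ∑ g ∈ piA.filter (fun g => ¬ Function.Injective g), F g :=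
          Finset.sum_congr rfl fun g hg => (hFeq g (Finset.mem_filter.1 hg).1).symm
      _ ≤ ∑ g ∈ (Finset.univ : Finset (Fin k)).offDiag.biUnion
            (fun p => piA.filter fun g => g p.1 = g p.2), F g :=
          Finset.sum_le_sum_of_subset_of_nonneg hsub (fun g _ _ => hFnn g)
      _ ≤ ∑ p ∈ (Finset.univ : Finset (Fin k)).offDiag,
            ∑ g ∈ piA.filter (fun g => g p.1 = g p.2), F g :=
          sum_biUnion_le_aux _ _ _ hFnn
      _ = ∑ p ∈ (Finset.univ : Finset (Fin k)).offDiag,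
            ∑ g ∈ piA.filter (fun g => g p.1 = g p.2), ∏ l, f (g l) :=
          Finset.sum_congr rfl fun p _ => Finset.sum_congr rfl
            fun g hg => hFeq g (Finset.mem_filter.1 hg).1
      _ ≤ ∑ _p ∈ (Finset.univ : Finset (Fin k)).offDiag, fmax * S ^ (k-1) :=
          Finset.sum_le_sum fun p hp => hpair p.1 p.2 (Finset.mem_offDiag.1 hp).2.2
      _ = ((Finset.univ : Finset (Fin k)).offDiag.card : ℝ) * (fmax * S ^ (k-1)) := by
          rw [Finset.sum_const, nsmul_eq_mul]
      _ ≤ (k:ℝ)^2 * fmax * S ^ (k-1) := by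
          have : (0:ℝ) ≤ fmax * S ^ (k-1) := mul_nonneg hfmax.le (pow_nonneg hS0 _)
          nlinarith
  -- finish
  have hsplit : (∑ g ∈ piA.filter (fun g => Function.Injective g), ∏ l, f (g l)) +
      (∑ g ∈ piA.filter (fun g => ¬ Function.Injective g), ∏ l, f (g l)) = S ^ k := by
    rw [Finset.sum_filter_add_sum_filter_not]
    exact htotal
  have hSk : S ^ k = S * S ^ (k - 1) := by
    conv_lhs => rw [← Nat.succ_pred_eq_of_pos hk]
    rw [pow_succ', Nat.pred_eq_sub_one]
  have hdiv : (k:ℝ)^2 * fmax / S * S ^ k = (k:ℝ)^2 * fmax * S ^ (k-1) := by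
    rw [hSk]
    field_simp
  have hnn : 0 ≤ ∑ g ∈ piA.filter (fun g => ¬ Function.Injective g), ∏ l, f (g l) :=
    Finset.sum_nonneg fun g hg => hterm g ((hmem g).1 (Finset.mem_filter.1 hg).1)
  rw [hsetEq]
  constructor
  · rw [sub_mul, one_mul, hdiv]
    linarith
  · have h0 : (0:ℝ) ≤ (k:ℝ)^2 * fmax / S * S ^ k :=
      mul_nonneg (div_nonneg (mul_nonneg (by positivity) hfmax.le) hS0) (pow_nonneg hS0 k)
    rw [add_mul, one_mul]
    linarith
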